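/- Let f : X → Y be a continuous affine map of compact convex subsets of Hausdorff locally convex spaces. If the induced map cc(f) : cc(X) → cc(Y) between hyperspaces of nonempty compact convex subsets (with Vietoris topologies) is open, then f itself is open. -/

import Mathlib

/-- Hyperspace of nonempty compact convex subsets of `E` contained in `X`. -/
abbrev CCIn (E : Type*) [AddCommGroup E] [Module ℝ E] [TopologicalSpace E]
    (X : Set E) : Type _ :=
  {A : Set E // A.Nonempty ∧ IsCompact A ∧ Convex ℝ A ∧ A ⊆ X}

/-- Vietoris topology on `CCIn E X`. -/
def vietorisCC (E : Type*) [AddCommGroup E] [Module ℝ E] [TopologicalSpace E]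
    (X : Set E) : TopologicalSpace (CCIn E X) :=
  TopologicalSpace.generateFrom
    ({S | ∃ U : Set E, IsOpen U ∧ S = {A : CCIn E X | (A : Set E) ⊆ U}} ∪
     {S | ∃ U : Set E, IsOpen U ∧ S = {A : CCIn E X | ((A : Set E) ∩ U).Nonempty}})

/-- If `f : X → Y` is a continuous affine map of compact convex
subsets of Hausdorff locally convex spaces and the induced map
`cc(f) : cc(X) → cc(Y)` is open (Vietoris topologies), then `f` itself is open
(as a map from `X` onto its image in `Y`). -/
theorem cc_open_implies_open
    (E F : Type*) [AddCommGroup E] [Module ℝ E] [TopologicalSpace E]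
    [IsTopologicalAddGroup E] [ContinuousSMul ℝ E] [T2Space E] [LocallyConvexSpace ℝ E]
    [AddCommGroup F] [Module ℝ F] [TopologicalSpace F]
    [IsTopologicalAddGroup F] [ContinuousSMul ℝ F] [T2Space F] [LocallyConvexSpace ℝ F]
    (X : Set E) (Y : Set F) (hX : IsCompact X) (hXv : Convex ℝ X)
    (hY : IsCompact Y) (hYv : Convex ℝ Y)
    (f : E → F) (hcont : ContinuousOn f X) (hmaps : Set.MapsTo f X Y)
    (haff : ∀ x ∈ X, ∀ y ∈ X, ∀ t : ℝ, t ∈ Set.Icc (0:ℝ) 1 →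
      f (t • x + (1 - t) • y) = t • f x + (1 - t) • f y)
    (hsurj : f '' X = Y)
    (g : CCIn E X → CCIn F Y) (hg : ∀ A : CCIn E X, (g A : Set F) = f '' (A : Set E))
    (hgopen : @IsOpenMap (CCIn E X) (CCIn F Y) (vietorisCC E X) (vietorisCC F Y) g) :
    ∀ U : Set E, IsOpen U → ∃ V : Set F, IsOpen V ∧ f '' (U ∩ X) = V ∩ Y := by
  intro U hU
  -- singleton embedding of Y into CCIn F Y
  set sing : Y → CCIn F Y := fun y =>
    ⟨{(y : F)}, Set.singleton_nonempty _, isCompact_singleton, convex_singleton _,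
      by simpa using y.2⟩ with hsing
  have hsingcont : @Continuous _ _ _ (vietorisCC F Y) sing := by
    rw [vietorisCC, continuous_generateFrom_iff]
    rintro s (⟨V, hV, rfl⟩ | ⟨V, hV, rfl⟩)
    · have : sing ⁻¹' {A : CCIn F Y | (A : Set F) ⊆ V} = Subtype.val ⁻¹' V := by
        ext y; simp [hsing, Set.singleton_subset_iff]
      rw [this]; exact hV.preimage continuous_subtype_val
    · have : sing ⁻¹' {A : CCIn F Y | ((A : Set F) ∩ V).Nonempty} = Subtype.val ⁻¹' V := by
        ext y; simp [hsing, Set.singleton_inter_nonempty]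
      rw [this]; exact hV.preimage continuous_subtype_val
  have hW : @IsOpen _ (vietorisCC E X) {A : CCIn E X | (A : Set E) ⊆ U} :=
    TopologicalSpace.GenerateOpen.basic _ (Or.inl ⟨U, hU, rfl⟩)
  have hopen : IsOpen (sing ⁻¹' (g '' {A : CCIn E X | (A : Set E) ⊆ U})) :=
    @IsOpen.preimage _ _ _ (vietorisCC F Y) sing hsingcont _ (hgopen _ hW)
  rw [isOpen_induced_iff] at hopen
  obtain ⟨V, hV, hVeq⟩ := hopen
  refine ⟨V, hV, ?_⟩
  ext y
  constructor
  · rintro ⟨x, ⟨hxU, hxX⟩, rfl⟩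
    have hyY : f x ∈ Y := hmaps hxX
    have : (⟨f x, hyY⟩ : Y) ∈ Subtype.val ⁻¹' V := by
      rw [hVeq]
      refine ⟨⟨{x}, Set.singleton_nonempty _, isCompact_singleton, convex_singleton _,
        Set.singleton_subset_iff.2 hxX⟩, Set.singleton_subset_iff.2 hxU, ?_⟩
      apply Subtype.ext
      simp [hg, hsing]
    exact ⟨this, hyY⟩
  · rintro ⟨hyV, hyY⟩
    have : (⟨y, hyY⟩ : Y) ∈ sing ⁻¹' (g '' {A : CCIn E X | (A : Set E) ⊆ U}) := by
      rw [← hVeq]; exact hyV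
    obtain ⟨A, hAU, hAg⟩ := this
    have hset : f '' (A : Set E) = {y} := by
      rw [← hg A, hAg]
    obtain ⟨x, hxA⟩ := A.2.1
    have hxX : x ∈ X := A.2.2.2.2 hxA
    have hfx : f x = y := by
      have : f x ∈ f '' (A : Set E) := Set.mem_image_of_mem f hxA
      rwa [hset, Set.mem_singleton_iff] at this
    exact ⟨x, ⟨hAU hxA, hxX⟩, hfx⟩
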